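/- Let g₀ : ℂ → ℂ be entire with g₀(0) = 1. For every integer n ≥ 0 there exist complex constants c_{0,n}, …, c_{n−1,n}, depending only on g₀ and n (not on f or z), such that for every entire function f : ℂ → ℂ and every z ∈ ℂ one has (D_{0,g₀})ⁿ(f)(z) = (1/n!)·(∂ⁿ/∂tⁿ)[T_z(f)](t)|_{t=0} + Σ_{k=0}^{n−1} c_{k,n}·(∂ᵏ/∂tᵏ)[T_z(f)](t)|_{t=0}. In particular for n = 0 the formula reads f(z) = T_z(f)(0). -/

import Mathlib

open Complex

/-- The Pommiez operator `D_{0,g₀}` associated with `g₀`. -/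
noncomputable def pommiez (g₀ f : ℂ → ℂ) : ℂ → ℂ := fun t =>
  if t = 0 then deriv f 0 - deriv g₀ 0 * f 0 else (f t - g₀ t * f 0) / t

/-- The shift operator `T_z` for the Pommiez operator `D_{0,g₀}`. -/
noncomputable def shiftT (g₀ f : ℂ → ℂ) (z : ℂ) : ℂ → ℂ := fun t =>
  if t = z then z * g₀ z * deriv f z - z * f z * deriv g₀ z + f z * g₀ z
  else (t * f t * g₀ z - z * f z * g₀ t) / (t - z)

lemma dslope_entire {F : ℂ → ℂ} (hF : Differentiable ℂ F) (a : ℂ) :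
    Differentiable ℂ (dslope F a) := by
  intro b
  rcases eq_or_ne b a with rfl | h
  · obtain ⟨p, hp⟩ := hF.analyticAt b
    exact hp.has_fpower_series_dslope_fslope.analyticAt.differentiableAt
  · exact (differentiableAt_dslope_of_ne h).2 (hF b)

lemma iteratedDeriv_eq_coeff {F : ℂ → ℂ} {p : FormalMultilinearSeries ℂ ℂ ℂ}
    (hp : HasFPowerSeriesAt F p 0) (k : ℕ) :
    iteratedDeriv k F 0 = (k.factorial : ℂ) * p.coeff k := by
  obtain ⟨r, hr⟩ := hp
  have := hr.factorial_smul (1 : ℂ) k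
  rw [iteratedDeriv_eq_iteratedFDeriv, ← this, nsmul_eq_mul]
  rfl

lemma iteratedDeriv_dslope {F : ℂ → ℂ} (hF : Differentiable ℂ F) (k : ℕ) :
    iteratedDeriv k (dslope F 0) 0 = iteratedDeriv (k + 1) F 0 / (k + 1) := by
  obtain ⟨p, hp⟩ := hF.analyticAt 0
  rw [iteratedDeriv_eq_coeff hp.has_fpower_series_dslope_fslope k,
    iteratedDeriv_eq_coeff hp (k + 1), FormalMultilinearSeries.coeff_fslope,
    Nat.factorial_succ]
  have : ((k:ℂ) + 1) ≠ 0 := Nat.cast_add_one_ne_zero k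
  push_cast
  field_simp

lemma pommiez_eq_dslope (g₀ f : ℂ → ℂ) (hg₀ : Differentiable ℂ g₀) (hg₀0 : g₀ 0 = 1)
    (hf : Differentiable ℂ f) :
    pommiez g₀ f = dslope (fun t => f t - g₀ t * f 0) 0 := by
  funext t
  rcases eq_or_ne t 0 with rfl | h
  · rw [dslope_same]
    have h1 : HasDerivAt (fun t => f t - g₀ t * f 0)
        (deriv f 0 - deriv g₀ 0 * f 0) 0 :=
      ((hf 0).hasDerivAt).sub (((hg₀ 0).hasDerivAt).mul_const (f 0))
    rw [h1.deriv, pommiez, if_pos rfl]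
  · rw [dslope_of_ne _ h, slope_def_field, pommiez, if_neg h]
    simp [div_eq_div_iff, hg₀0]

lemma shiftT_eq_dslope (g₀ f : ℂ → ℂ) (hg₀ : Differentiable ℂ g₀)
    (hf : Differentiable ℂ f) (z : ℂ) :
    shiftT g₀ f z = dslope (fun t => t * f t * g₀ z - z * f z * g₀ t) z := by
  funext t
  rcases eq_or_ne t z with rfl | h
  · rw [dslope_same]
    have h1 : HasDerivAt (fun s => s * f s * g₀ t - t * f t * g₀ s)
        ((1 * f t + t * deriv f t) * g₀ t - t * f t * deriv g₀ t) t :=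
      (((hasDerivAt_id t).mul ((hf t).hasDerivAt)).mul_const (g₀ t)).sub
        (((hg₀ t).hasDerivAt).const_mul (t * f t))
    rw [h1.deriv, shiftT, if_pos rfl]
    ring
  · rw [dslope_of_ne _ h, slope_def_field, shiftT, if_neg h]
    have : z * f z * g₀ z - z * f z * g₀ z = 0 := by ring
    rw [this, sub_zero]

lemma shiftT_entire (g₀ f : ℂ → ℂ) (hg₀ : Differentiable ℂ g₀)
    (hf : Differentiable ℂ f) (z : ℂ) : Differentiable ℂ (shiftT g₀ f z) := by
  rw [shiftT_eq_dslope g₀ f hg₀ hf z]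
  exact dslope_entire (by fun_prop) z

lemma pommiez_entire (g₀ f : ℂ → ℂ) (hg₀ : Differentiable ℂ g₀) (hg₀0 : g₀ 0 = 1)
    (hf : Differentiable ℂ f) : Differentiable ℂ (pommiez g₀ f) := by
  rw [pommiez_eq_dslope g₀ f hg₀ hg₀0 hf]
  exact dslope_entire (by fun_prop) 0

lemma iteratedDeriv_sub' {f g : ℂ → ℂ} (hf : Differentiable ℂ f) (hg : Differentiable ℂ g)
    (n : ℕ) (x : ℂ) :
    iteratedDeriv n (fun t => f t - g t) x = iteratedDeriv n f x - iteratedDeriv n g x := by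
  have := iteratedDerivWithin_sub (Set.mem_univ x) uniqueDiffOn_univ
    ((hf.contDiff.contDiffOn (n := n)) x (Set.mem_univ x)) ((hg.contDiff.contDiffOn (n := n)) x (Set.mem_univ x))
  simpa [iteratedDerivWithin_univ, Pi.sub_def] using this

lemma iteratedDeriv_pommiez (g₀ f : ℂ → ℂ) (hg₀ : Differentiable ℂ g₀) (hg₀0 : g₀ 0 = 1)
    (hf : Differentiable ℂ f) (k : ℕ) :
    iteratedDeriv k (pommiez g₀ f) 0 =
      (iteratedDeriv (k + 1) f 0 - iteratedDeriv (k + 1) g₀ 0 * f 0) / (k + 1) := by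
  rw [pommiez_eq_dslope g₀ f hg₀ hg₀0 hf,
    iteratedDeriv_dslope (by fun_prop) k]
  congr 1
  rw [iteratedDeriv_sub' hf (by fun_prop) (k+1) 0]
  congr 1
  have : (fun t => g₀ t * f 0) = fun t => f 0 * g₀ t := by funext t; ring
  rw [this]
  have := iteratedDerivWithin_const_mul (Set.mem_univ (0:ℂ)) uniqueDiffOn_univ (f 0)
    ((hg₀.contDiff.contDiffOn (n := k+1)) 0 (Set.mem_univ 0))
  simpa [iteratedDerivWithin_univ, mul_comm] using this

/-- Lemma 4: functional form at 0 for iterates of the Pommiez operator. -/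
lemma pommiez_iterate_zero (g₀ : ℂ → ℂ) (hg₀ : Differentiable ℂ g₀) (hg₀0 : g₀ 0 = 1) :
    ∀ n : ℕ, ∃ c : ℕ → ℂ, ∀ F : ℂ → ℂ, Differentiable ℂ F →
      (pommiez g₀)^[n] F 0 =
        (1 / (n.factorial : ℂ)) * iteratedDeriv n F 0 +
          ∑ k ∈ Finset.range n, c k * iteratedDeriv k F 0 := by
  intro n
  induction n with
  | zero =>
    exact ⟨fun _ => 0, fun F _ => by simp⟩
  | succ n ih =>
    obtain ⟨c, hc⟩ := ih
    refine ⟨fun k => if k = 0 then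
        (-(1 / (n.factorial : ℂ)) * iteratedDeriv (n + 1) g₀ 0 / (n + 1)
          - ∑ j ∈ Finset.range n, c j * iteratedDeriv (j + 1) g₀ 0 / (j + 1))
      else c (k - 1) / (k : ℂ), fun F hF => ?_⟩
    have hPF : Differentiable ℂ (pommiez g₀ F) := pommiez_entire g₀ F hg₀ hg₀0 hF
    rw [Function.iterate_succ_apply, hc (pommiez g₀ F) hPF]
    have hd : ∀ k : ℕ, iteratedDeriv k (pommiez g₀ F) 0 =
        (iteratedDeriv (k + 1) F 0 - iteratedDeriv (k + 1) g₀ 0 * F 0) / (k + 1) :=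
      iteratedDeriv_pommiez g₀ F hg₀ hg₀0 hF
    rw [Finset.sum_range_succ']
    simp only [hd, if_pos rfl]
    have hne : ∀ k : ℕ, ((k : ℂ) + 1) ≠ 0 := fun k => Nat.cast_add_one_ne_zero k
    have hsum : ∀ k ∈ Finset.range n,
        c k * ((iteratedDeriv (k + 1) F 0 - iteratedDeriv (k + 1) g₀ 0 * F 0) / (k + 1)) =
        (c k / ((k:ℂ) + 1)) * iteratedDeriv (k + 1) F 0
          - c k * iteratedDeriv (k + 1) g₀ 0 / (k + 1) * F 0 := by
      intro k _
      field_simp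
    rw [Finset.sum_congr rfl hsum, Finset.sum_sub_distrib]
    have h0 : iteratedDeriv 0 F 0 = F 0 := rfl
    have hfac : ((n + 1).factorial : ℂ) = (n.factorial : ℂ) * ((n : ℂ) + 1) := by
      rw [Nat.factorial_succ]; push_cast; ring
    have hifne : ∀ k : ℕ, ((k.factorial : ℂ)) ≠ 0 := fun k =>
      Nat.cast_ne_zero.mpr k.factorial_ne_zero
    rw [← Finset.sum_mul]
    have hcongr : ∀ k ∈ Finset.range n,
        (if k + 1 = 0 then
          (-(1 / (n.factorial : ℂ)) * iteratedDeriv (n + 1) g₀ 0 / (n + 1)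
            - ∑ j ∈ Finset.range n, c j * iteratedDeriv (j + 1) g₀ 0 / (j + 1))
          else c (k + 1 - 1) / ((k+1 : ℕ) : ℂ)) * iteratedDeriv (k + 1) F 0 =
        (c k / ((k:ℂ) + 1)) * iteratedDeriv (k + 1) F 0 := by
      intro k _
      rw [if_neg (Nat.succ_ne_zero k)]
      push_cast
      ring
    rw [Finset.sum_congr rfl hcongr]
    rw [h0, hfac]
    rw [if_pos trivial]
    field_simp
    ring

lemma shiftT_zero_fun (g₀ f : ℂ → ℂ) (hg₀0 : g₀ 0 = 1) : shiftT g₀ f 0 = f := by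
  funext t
  rcases eq_or_ne t 0 with rfl | h
  · simp [shiftT, hg₀0]
  · simp [shiftT, if_neg h, hg₀0]
    field_simp

lemma shiftT_apply_zero (g₀ f : ℂ → ℂ) (hg₀0 : g₀ 0 = 1) (z : ℂ) :
    shiftT g₀ f z 0 = f z := by
  rcases eq_or_ne z 0 with rfl | h
  · rw [shiftT_zero_fun g₀ f hg₀0]
  · rw [shiftT, if_neg (Ne.symm h), hg₀0]
    field_simp
    ring

lemma pommiez_shiftT_comm (g₀ f : ℂ → ℂ) (hg₀ : Differentiable ℂ g₀) (hg₀0 : g₀ 0 = 1)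
    (hf : Differentiable ℂ f) (z : ℂ) :
    pommiez g₀ (shiftT g₀ f z) = shiftT g₀ (pommiez g₀ f) z := by
  rcases eq_or_ne z 0 with rfl | hz
  · rw [shiftT_zero_fun g₀ f hg₀0, shiftT_zero_fun g₀ (pommiez g₀ f) hg₀0]
  · have hS : Differentiable ℂ (shiftT g₀ f z) := shiftT_entire g₀ f hg₀ hf z
    have hP : Differentiable ℂ (pommiez g₀ f) := pommiez_entire g₀ f hg₀ hg₀0 hf
    have hL : Continuous (pommiez g₀ (shiftT g₀ f z)) :=
      (pommiez_entire g₀ _ hg₀ hg₀0 hS).continuous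
    have hR : Continuous (shiftT g₀ (pommiez g₀ f) z) :=
      (shiftT_entire g₀ _ hg₀ hP z).continuous
    have hdense : Dense (({0, z} : Set ℂ)ᶜ) :=
      (Set.toFinite _).countable.dense_compl ℂ
    refine Continuous.ext_on hdense hL hR ?_
    rintro t ht
    simp only [Set.mem_compl_iff, Set.mem_insert_iff, Set.mem_singleton_iff, not_or] at ht
    obtain ⟨ht0, htz⟩ := ht
    have h0z : ¬(0:ℂ) = z := fun h => hz h.symm
    simp only [pommiez, shiftT, if_neg ht0, if_neg htz, if_neg hz, if_neg h0z, hg₀0]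
    have h1 : t - z ≠ 0 := sub_ne_zero.mpr htz
    field_simp
    ring

lemma pommiez_iterate_entire (g₀ f : ℂ → ℂ) (hg₀ : Differentiable ℂ g₀) (hg₀0 : g₀ 0 = 1)
    (hf : Differentiable ℂ f) (n : ℕ) : Differentiable ℂ ((pommiez g₀)^[n] f) := by
  induction n with
  | zero => exact hf
  | succ n ih =>
    rw [Function.iterate_succ_apply']
    exact pommiez_entire g₀ _ hg₀ hg₀0 ih

lemma pommiez_iterate_shiftT_comm (g₀ f : ℂ → ℂ) (hg₀ : Differentiable ℂ g₀)
    (hg₀0 : g₀ 0 = 1) (hf : Differentiable ℂ f) (z : ℂ) (n : ℕ) :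
    (pommiez g₀)^[n] (shiftT g₀ f z) = shiftT g₀ ((pommiez g₀)^[n] f) z := by
  induction n with
  | zero => rfl
  | succ n ih =>
    rw [Function.iterate_succ_apply', ih, Function.iterate_succ_apply',
      pommiez_shiftT_comm g₀ _ hg₀ hg₀0 (pommiez_iterate_entire g₀ f hg₀ hg₀0 hf n) z]


/-- for every `n ≥ 0` there exist constants `c k` (`k < n`), depending only
on `g₀` and `n`, such that for every entire `f` and every `z`,
`(D_{0,g₀})ⁿ(f)(z) = (1/n!)·(T_z f)⁽ⁿ⁾(0) + Σ_{k<n} c k · (T_z f)⁽ᵏ⁾(0)`. -/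
theorem pommiez_iterate_eq_functional_of_shift
    (g₀ : ℂ → ℂ) (hg₀ : Differentiable ℂ g₀) (hg₀0 : g₀ 0 = 1) :
    ∀ n : ℕ, ∃ c : ℕ → ℂ, ∀ f : ℂ → ℂ, Differentiable ℂ f → ∀ z : ℂ,
      (pommiez g₀)^[n] f z =
        (1 / (n.factorial : ℂ)) * iteratedDeriv n (shiftT g₀ f z) 0 +
          ∑ k ∈ Finset.range n, c k * iteratedDeriv k (shiftT g₀ f z) 0 := by
  intro n
  obtain ⟨c, hc⟩ := pommiez_iterate_zero g₀ hg₀ hg₀0 n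
  refine ⟨c, fun f hf z => ?_⟩
  have h1 : (pommiez g₀)^[n] f z = (pommiez g₀)^[n] (shiftT g₀ f z) 0 := by
    rw [pommiez_iterate_shiftT_comm g₀ f hg₀ hg₀0 hf z n,
      shiftT_apply_zero g₀ _ hg₀0 z]
  rw [h1, hc (shiftT g₀ f z) (shiftT_entire g₀ f hg₀ hf z)]
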